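/- Let Q be the cyclic 4-node quiver with arrows α₀,α₁: 1→2, β₀,β₁: 2→3, γ₀,γ₁: 3→4, δ₀,δ₁: 4→1 and relations (for all cyclic rotations) β₀γ₁δ₁ = β₁γ₁δ₀, β₁γ₀δ₀ = β₀γ₀δ₁, etc., derived from the superpotential W = tr(α₀(β₀γ₁δ₁ − β₁γ₁δ₀) + α₁(β₁γ₀δ₀ − β₀γ₀δ₁)). Then every path p = p₁p₂⋯p_k in ℂQ has a unique normal-form representative p̃₁p̃₂⋯p̃_k such that the subsequences of arrows in even positions and in odd positions each have weakly increasing indices. -/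

import Mathlib

open FreeAlgebra

/-- Generators of the path algebra of the cyclic quiver with vertices `0,1,2,3` and two
arrows `ar v 0, ar v 1 : v → v+1` for each vertex `v` (so `α_i = ar 0 i`, `β_i = ar 1 i`,
`γ_i = ar 2 i`, `δ_i = ar 3 i`). -/
inductive GC where
  | e : Fin 4 → GC             -- trivial paths
  | ar : Fin 4 → Fin 2 → GC    -- the two arrows `v → v+1`

namespace GC

/-- Relations presenting the path algebra of the cyclic quiver modulo the F-term
relations of the superpotential
`W = tr(α₀(β₀γ₁δ₁ − β₁γ₁δ₀) + α₁(β₁γ₀δ₀ − β₀γ₀δ₁))`: for every vertex `v`, the paths of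
length three starting at `v` satisfy `(0,1,1) = (1,1,0)` and `(1,0,0) = (0,0,1)`. -/
inductive rel : FreeAlgebra ℂ GC → FreeAlgebra ℂ GC → Prop
  | unit : rel (∑ i : Fin 4, ι ℂ (e i)) 1
  | orth (i j : Fin 4) : rel (ι ℂ (e i) * ι ℂ (e j)) (if i = j then ι ℂ (e i) else 0)
  | src (v : Fin 4) (i : Fin 2) : rel (ι ℂ (e v) * ι ℂ (ar v i)) (ι ℂ (ar v i))
  | tgt (v : Fin 4) (i : Fin 2) : rel (ι ℂ (ar v i) * ι ℂ (e (v + 1))) (ι ℂ (ar v i))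
  | fterm₁ (v : Fin 4) :
      rel (ι ℂ (ar v 0) * ι ℂ (ar (v + 1) 1) * ι ℂ (ar (v + 2) 1))
          (ι ℂ (ar v 1) * ι ℂ (ar (v + 1) 1) * ι ℂ (ar (v + 2) 0))
  | fterm₂ (v : Fin 4) :
      rel (ι ℂ (ar v 1) * ι ℂ (ar (v + 1) 0) * ι ℂ (ar (v + 2) 0))
          (ι ℂ (ar v 0) * ι ℂ (ar (v + 1) 0) * ι ℂ (ar (v + 2) 1))

end GC

/-- The path algebra `ℂQ` of the cyclic quiver modulo the F-term relations of `W`. -/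
abbrev AC : Type := RingQuot GC.rel

namespace AC

noncomputable def ε (v : Fin 4) : AC := RingQuot.mkAlgHom ℂ GC.rel (ι ℂ (GC.e v))

noncomputable def arr (v : Fin 4) (i : Fin 2) : AC := RingQuot.mkAlgHom ℂ GC.rel (ι ℂ (GC.ar v i))

/-- The element of `ℂQ` determined by a path: since each vertex `v` has exactly the two
outgoing arrows `ar v 0, ar v 1 : v → v + 1`, a path is recorded by its starting vertex
together with the list of the indices of its consecutive arrows. -/
noncomputable def pathEl : Fin 4 → List (Fin 2) → AC
  | v, [] => ε v
  | v, i :: l => arr v i * pathEl (v + 1) l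

/-- A word of arrow indices is in normal form when the subsequences of indices in the even
positions and in the odd positions are each weakly increasing. -/
def NormalForm (l : List (Fin 2)) : Prop :=
  ∀ (i : ℕ) (h : i + 2 < l.length), l.get ⟨i, by omega⟩ ≤ l.get ⟨i + 2, h⟩

end AC

open Fin.NatCast Fin.CommRing

namespace AC
open GC Matrix MvPolynomial

/-- parity of a vertex -/
def par (v : Fin 4) : Fin 2 := ⟨v.val % 2, Nat.mod_lt _ (by norm_num)⟩

lemma par_add_one : ∀ v : Fin 4, par (v + 1) = par v + 1 := by decide
lemma par_add_two : ∀ v : Fin 4, par (v + 2) = par v := by decide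

abbrev B : Type := Matrix (Fin 4) (Fin 4) (MvPolynomial (Fin 2 × Fin 2) ℂ)

noncomputable def rep : GC → B
  | .e v => single v v 1
  | .ar v i => single v (v + 1) (X (par v, i))

lemma one_eq_sum : (1 : B) = ∑ i : Fin 4, single i i 1 := by
  ext i j
  simp only [Matrix.sum_apply, Matrix.single, Matrix.of_apply, Matrix.one_apply]
  by_cases h : i = j
  · subst h; simp
  · simp [h, fun k => show ¬(k = i ∧ k = j) from fun ⟨h1, h2⟩ => h (h1 ▸ h2)]

lemma add_one_one (v : Fin 4) : v + 1 + 1 = v + 2 := by ring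

lemma rep_rel : ∀ ⦃x y⦄, GC.rel x y → FreeAlgebra.lift ℂ rep x = FreeAlgebra.lift ℂ rep y := by
  intro x y h
  induction h with
  | unit => simp [rep, one_eq_sum]
  | orth i j =>
      by_cases h : i = j
      · subst h; simp [rep, Matrix.single_mul_single_same]
      · simp [rep, h, Matrix.single_mul_single_of_ne]
  | src v i => simp [rep, Matrix.single_mul_single_same]
  | tgt v i => simp [rep, Matrix.single_mul_single_same]
  | fterm₁ v =>
      simp only [_root_.map_mul, FreeAlgebra.lift_ι_apply, rep, add_one_one,
        Matrix.single_mul_single_same]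
      rw [par_add_two]; ring_nf
  | fterm₂ v =>
      simp only [_root_.map_mul, FreeAlgebra.lift_ι_apply, rep, add_one_one,
        Matrix.single_mul_single_same]
      rw [par_add_two]; ring_nf

noncomputable def φ : AC →ₐ[ℂ] B :=
  RingQuot.liftAlgHom ℂ ⟨FreeAlgebra.lift ℂ rep, rep_rel⟩

lemma φ_ε (v : Fin 4) : φ (ε v) = single v v 1 := by
  simp [φ, ε, RingQuot.liftAlgHom_mkAlgHom_apply, rep]

lemma φ_arr (v : Fin 4) (i : Fin 2) : φ (arr v i) = single v (v + 1) (X (par v, i)) := by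
  simp [φ, arr, RingQuot.liftAlgHom_mkAlgHom_apply, rep]

end AC

namespace AC
open GC Matrix MvPolynomial

noncomputable def cnt : Fin 4 → List (Fin 2) → ((Fin 2 × Fin 2) →₀ ℕ)
  | _, [] => 0
  | v, i :: l => Finsupp.single (par v, i) 1 + cnt (v + 1) l

lemma cast_succ (v : Fin 4) (n : ℕ) : v + (↑(n + 1) : Fin 4) = (v + 1) + ↑n := by
  push_cast; ring

lemma φ_pathEl (l : List (Fin 2)) : ∀ v, φ (pathEl v l) =
    single v (v + ↑l.length) (monomial (cnt v l) 1) := by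
  induction l with
  | nil =>
      intro v
      simp [pathEl, φ_ε, cnt, monomial_zero']
  | cons i l ih =>
      intro v
      rw [pathEl, _root_.map_mul, φ_arr, ih (v + 1), Matrix.single_mul_single_same]
      rw [show ((i :: l).length : Fin 4) = ((l.length + 1 : ℕ) : Fin 4) from by norm_num]
      rw [cast_succ]

      rw [X, monomial_mul, one_mul]
      rfl

lemma pathEl_cnt_eq {v : Fin 4} {l₁ l₂ : List (Fin 2)} (hlen : l₁.length = l₂.length)
    (h : pathEl v l₁ = pathEl v l₂) : cnt v l₁ = cnt v l₂ := by
  have h0 := congrArg φ h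
  rw [φ_pathEl, φ_pathEl, hlen] at h0
  have h2 := congrArg (fun M : B => M v (v + ↑l₂.length)) h0
  simp only [Matrix.single_apply_same] at h2
  exact MvPolynomial.monomial_left_injective (one_ne_zero) h2

def evens : List (Fin 2) → List (Fin 2)
  | [] => []
  | [a] => [a]
  | a :: _ :: l => a :: evens l

def odds (l : List (Fin 2)) : List (Fin 2) := evens l.tail

lemma evens_cons (a : Fin 2) (l : List (Fin 2)) : evens (a :: l) = a :: odds l := by
  cases l <;> rfl

lemma odds_cons (a : Fin 2) (l : List (Fin 2)) : odds (a :: l) = evens l := rfl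

def inter : List (Fin 2) → List (Fin 2) → List (Fin 2)
  | [], m => m
  | a :: l, m => a :: inter m l
termination_by l m => l.length + m.length
decreasing_by simp; omega

lemma inter_evens_odds : ∀ l : List (Fin 2), inter (evens l) (odds l) = l
  | [] => by simp [evens, odds, inter]
  | a :: t => by rw [evens_cons, odds_cons]; simp only [inter]; rw [inter_evens_odds t]

lemma fin2_add_one_add_one : ∀ x : Fin 2, x + 1 + 1 = x := by decide
lemma fin2_ne_add_one : ∀ x : Fin 2, x ≠ x + 1 := by decide

lemma cnt_apply : ∀ (l : List (Fin 2)) (v : Fin 4) (b : Fin 2),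
    cnt v l (par v, b) = (evens l).count b ∧ cnt v l (par v + 1, b) = (odds l).count b
  | [], v, b => by simp [cnt, evens, odds]
  | i :: l, v, b => by
      obtain ⟨h1, h2⟩ := cnt_apply l (v + 1) b
      rw [par_add_one] at h1 h2
      rw [fin2_add_one_add_one] at h2
      constructor
      · rw [cnt, evens_cons]
        simp only [Finsupp.add_apply, Finsupp.single_apply, List.count_cons, h2,
          Prod.mk.injEq, true_and, beq_iff_eq]
        by_cases hib : i = b
        · simp only [if_pos hib]; omega
        · simp only [if_neg hib]; omega
      · rw [cnt, odds_cons]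
        simp only [Finsupp.add_apply, Finsupp.single_apply, h1]
        rw [if_neg (fun hpq => fin2_ne_add_one (par v) (congrArg Prod.fst hpq))]
        simp

lemma nf_tail {a : Fin 2} {l : List (Fin 2)} (h : NormalForm (a :: l)) : NormalForm l := by
  intro i hi
  have := h (i + 1) (by simp only [List.length_cons]; omega)
  simpa using this

theorem nf_chain : ∀ l : List (Fin 2), NormalForm l → (evens l).IsChain (· ≤ ·)
  | [] => fun _ => List.isChain_nil
  | [a] => fun _ => by simp [evens]
  | a :: b :: t => fun h => by
      rw [evens_cons, odds_cons, List.isChain_cons]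
      refine ⟨?_, nf_chain t (nf_tail (nf_tail h))⟩
      intro y hy
      cases t with
      | nil => simp [evens] at hy
      | cons c t' =>
          rw [evens_cons] at hy
          simp only [List.head?_cons, Option.mem_def, Option.some.injEq] at hy
          subst hy
          have := h 0 (by simp)
          simpa using this

theorem nf_chain_odds (l : List (Fin 2)) (h : NormalForm l) : (odds l).IsChain (· ≤ ·) := by
  cases l with
  | nil => exact List.isChain_nil
  | cons a t => exact nf_chain t (nf_tail h)

lemma nf_unique {v : Fin 4} {l₁ l₂ : List (Fin 2)} (h1 : NormalForm l₁) (h2 : NormalForm l₂)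
    (hlen : l₁.length = l₂.length) (h : pathEl v l₁ = pathEl v l₂) : l₁ = l₂ := by
  have hc := pathEl_cnt_eq hlen h
  have he : evens l₁ = evens l₂ := by
    refine List.Perm.eq_of_pairwise'
      (List.isChain_iff_pairwise.mp (nf_chain _ h1)) (List.isChain_iff_pairwise.mp (nf_chain _ h2)) (List.perm_iff_count.2 fun b => ?_)
    have := congrArg (fun f : (Fin 2 × Fin 2) →₀ ℕ => f (par v, b)) hc
    simpa only [(cnt_apply l₁ v b).1, (cnt_apply l₂ v b).1] using this
  have ho : odds l₁ = odds l₂ := by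
    refine List.Perm.eq_of_pairwise'
      (List.isChain_iff_pairwise.mp (nf_chain_odds _ h1)) (List.isChain_iff_pairwise.mp (nf_chain_odds _ h2)) (List.perm_iff_count.2 fun b => ?_)
    have := congrArg (fun f : (Fin 2 × Fin 2) →₀ ℕ => f (par v + 1, b)) hc
    simpa only [(cnt_apply l₁ v b).2, (cnt_apply l₂ v b).2] using this
  rw [← inter_evens_odds l₁, he, ho, inter_evens_odds]

end AC

namespace AC
open GC

lemma swap3 (v : Fin 4) (a b c : Fin 2) :
    arr v a * arr (v + 1) b * arr (v + 2) c = arr v c * arr (v + 1) b * arr (v + 2) a := by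
  have h1 := RingQuot.mkAlgHom_rel ℂ (GC.rel.fterm₁ v)
  have h2 := RingQuot.mkAlgHom_rel ℂ (GC.rel.fterm₂ v)
  simp only [_root_.map_mul] at h1 h2
  fin_cases a <;> fin_cases b <;> fin_cases c <;> simp only [arr] <;>
    first
      | rfl
      | exact h1
      | exact h1.symm
      | exact h2
      | exact h2.symm

lemma ε_mul : ∀ (l : List (Fin 2)) (v : Fin 4), ε v * pathEl v l = pathEl v l
  | [], v => by
      have := RingQuot.mkAlgHom_rel ℂ (GC.rel.orth v v)
      rw [if_pos rfl] at this
      simp only [_root_.map_mul] at this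
      simpa [pathEl, ε] using this
  | i :: l, v => by
      have := RingQuot.mkAlgHom_rel ℂ (GC.rel.src v i)
      simp only [_root_.map_mul] at this
      rw [pathEl, ← mul_assoc]
      rw [show (ε v * arr v i) = arr v i from by simpa [ε, arr] using this]

lemma pathEl_append : ∀ (L₁ : List (Fin 2)) (v : Fin 4) (L₂ : List (Fin 2)),
    pathEl v (L₁ ++ L₂) = pathEl v L₁ * pathEl (v + ↑L₁.length) L₂
  | [], v, L₂ => by simp [pathEl, ε_mul]
  | i :: L₁, v, L₂ => by
      rw [List.cons_append, pathEl, pathEl_append L₁ (v + 1) L₂, pathEl, mul_assoc]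
      congr 2
      rw [List.length_cons, cast_succ]

lemma pathEl_swap (w : Fin 4) (a b c : Fin 2) (D : List (Fin 2)) :
    pathEl w (a :: b :: c :: D) = pathEl w (c :: b :: a :: D) := by
  simp only [pathEl, add_one_one, ← mul_assoc]
  rw [swap3]

def nu : List (Fin 2) → ℕ
  | [] => 0
  | i :: l => i.val * (l.length + 1) + nu l

lemma nu_append : ∀ A B : List (Fin 2), nu (A ++ B) = nu A + B.length * (A.map Fin.val).sum + nu B
  | [], B => by simp [nu]
  | i :: A, B => by
      simp only [List.cons_append, nu, nu_append A B, List.append_eq, List.length_append,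
        List.map_cons, List.sum_cons]
      ring

lemma fin2_not_le : ∀ x y : Fin 2, y < x → x = 1 ∧ y = 0 := by decide

theorem exists_nf (l : List (Fin 2)) (v : Fin 4) :
    ∃ l', l'.length = l.length ∧ NormalForm l' ∧ pathEl v l' = pathEl v l := by
  by_cases h : NormalForm l
  · exact ⟨l, rfl, h, rfl⟩
  · simp only [NormalForm] at h
    push_neg at h
    obtain ⟨k, hk, hlt⟩ := h
    simp only [List.get_eq_getElem] at hlt
    obtain ⟨ha, hc⟩ := fin2_not_le l[k] l[k + 2] hlt
    have hd : l.drop k = l[k] :: l[k + 1] :: l[k + 2] :: l.drop (k + 3) := by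
      rw [List.drop_eq_getElem_cons (by omega), List.drop_eq_getElem_cons (by omega),
        List.drop_eq_getElem_cons (by omega)]
    have hl : l = l.take k ++ (l[k] :: l[k + 1] :: l[k + 2] :: l.drop (k + 3)) := by
      rw [← hd, List.take_append_drop]
    have hlt2 : (l.take k).length = k := by
      rw [List.length_take]; omega
    set l₂ : List (Fin 2) := l.take k ++ (l[k + 2] :: l[k + 1] :: l[k] :: l.drop (k + 3)) with hl₂
    have hswap : pathEl v l₂ = pathEl v l := by
      conv_rhs => rw [hl]
      rw [hl₂, pathEl_append, pathEl_append, pathEl_swap]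
    have hlen2 : l₂.length = l.length := by
      conv_rhs => rw [hl]
      simp [hl₂]
      omega
    have hnu : nu l₂ < nu l := by
      have e1 : nu (l[k + 2] :: l[k + 1] :: l[k] :: l.drop (k + 3))
          < nu (l[k] :: l[k + 1] :: l[k + 2] :: l.drop (k + 3)) := by
        simp only [nu, List.length_cons, ha, hc, Fin.val_one, Fin.val_zero, zero_mul, one_mul]
        omega
      conv_rhs => rw [hl]
      rw [hl₂, nu_append, nu_append]
      simp only [List.length_cons] at e1 ⊢
      omega
    obtain ⟨l', h1, h2, h3⟩ := exists_nf l₂ v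
    exact ⟨l', by rw [h1, hlen2], h2, by rw [h3, hswap]⟩
termination_by nu l
decreasing_by exact hnu

end AC

open AC in
/-- Every path `p = p₁⋯p_k` in the path algebra of the cyclic quiver modulo the F-term
relations of `W` has a unique representative `p̃ = p̃₁⋯p̃_k` of the same length whose
indices at even positions and at odd positions are each weakly increasing. -/
theorem stmt14 (v : Fin 4) (l : List (Fin 2)) :
    ∃! l' : List (Fin 2),
      l'.length = l.length ∧ NormalForm l' ∧ pathEl v l' = pathEl v l := by
  obtain ⟨l', h1, h2, h3⟩ := exists_nf l v
  refine ⟨l', ⟨h1, h2, h3⟩, ?_⟩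
  rintro m ⟨hm1, hm2, hm3⟩
  exact nf_unique hm2 h2 (by rw [hm1, h1]) (by rw [hm3, h3])
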